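/- Let F be a finite field of characteristic 2 with q elements and G a dihedral group of order 2n with n odd, n ≥ 3. If V is a faithful simple FG-module, then ν₂(dim_F V) ≤ ω(n) + 1, where ω(n) = ν₂(ord_n(q)). -/

import Mathlib

noncomputable section

open Module

theorem aux_dvd_of_pow_sub_one_dvd {q d k : ℕ} (hq : 2 ≤ q) (hd : 0 < d)
    (h : q ^ d - 1 ∣ q ^ k - 1) : d ∣ k := by
  set u := k / d with hu
  set v := k % d with hv
  have hk : k = d * u + v := by rw [hu, hv]; exact (Nat.div_add_mod k d).symm
  have h1 : q ^ d - 1 ∣ q ^ (d * u) - 1 := by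
    have := Nat.sub_dvd_pow_sub_pow (q ^ d) 1 u
    simpa [← pow_mul] using this
  have hv1 : 1 ≤ q ^ v := Nat.one_le_pow _ _ (by omega)
  have hdu1 : 1 ≤ q ^ (d * u) := Nat.one_le_pow _ _ (by omega)
  have h2 : q ^ k - 1 = q ^ v * (q ^ (d * u) - 1) + (q ^ v - 1) := by
    rw [hk, pow_add, Nat.mul_comm (q ^ (d*u)) (q ^ v), Nat.mul_sub, Nat.mul_one]
    have : q ^ v ≤ q ^ v * q ^ (d * u) := Nat.le_mul_of_pos_right _ (by omega)
    omega
  have h3 : q ^ d - 1 ∣ q ^ v - 1 := by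
    have hm : q ^ d - 1 ∣ q ^ v * (q ^ (d * u) - 1) := h1.mul_left _
    have := (Nat.dvd_sub h hm)
    rwa [h2, Nat.add_sub_cancel_left] at this
  have hvd : v < d := Nat.mod_lt _ hd
  have h4 : q ^ v - 1 < q ^ d - 1 := by
    have h5 : q ^ v < q ^ d := Nat.pow_lt_pow_right (by omega) hvd
    have h6 : 1 ≤ q ^ d := Nat.one_le_pow _ _ (by omega)
    omega
  have h5 : v = 0 := by
    have hqv : q ^ v = 1 := by
      rcases Nat.eq_zero_or_pos (q ^ v - 1) with h0 | hpos
      · omega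
      · exact absurd (Nat.le_of_dvd hpos h3) (by omega)
    by_contra hv0
    have : q ^ v ≥ q ^ 1 := Nat.pow_le_pow_right (by omega) (by omega)
    simp at this; omega
  refine hk ▸ ⟨u, by omega⟩


set_option maxHeartbeats 1000000 in
set_option synthInstance.maxHeartbeats 400000 in
theorem aux_core (F : Type) [Field F] [Fintype F] [CharP F 2] (q : ℕ) (hq : Fintype.card F = q)
    (k : ℕ) (hk : 0 < k) (n : ℕ) (hn : 2 ≤ n) (hqk : q ^ k % n = 1 % n)
    (V : Type) [AddCommGroup V] [Module F V] [FiniteDimensional F V]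
    (A : Module.End F V) (hA : A ^ n = 1)
    (W : Submodule F V) (hWbot : W ≠ ⊥) (hinv : ∀ v ∈ W, A v ∈ W)
    (hmin : ∀ S : Submodule F V, S ≤ W → (∀ v ∈ S, A v ∈ S) → S ≠ ⊥ → S = W) :
    finrank F W ∣ k := by
  classical
  set a : Module.End F W := A.restrict hinv with ha
  have han : a ^ n = 1 := by
    rw [ha, Module.End.pow_restrict]
    ext x
    simp [LinearMap.restrict_apply, hA]
  set E := Algebra.adjoin F ({a} : Set (Module.End F W)) with hE
  letI : CommRing E := Algebra.adjoinCommRingOfComm F (by rintro x rfl y rfl; rfl)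
  have hxa : ∀ x : E, Commute (x : Module.End F W) a := fun x =>
    (Algebra.commute_of_mem_adjoin_self x.2).symm
  -- every nonzero element of E is injective on W
  have hinj : ∀ x : E, x ≠ 0 → Function.Injective (x : Module.End F W) := by
    intro x hx
    rw [← LinearMap.ker_eq_bot]
    by_contra hkx
    set S : Submodule F V := Submodule.map W.subtype (LinearMap.ker (x : Module.End F W)) with hS
    have hSle : S ≤ W := Submodule.map_subtype_le _ _
    have hSinv : ∀ v ∈ S, A v ∈ S := by
      rintro v ⟨u, hu, rfl⟩
      refine ⟨a u, ?_, ?_⟩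
      · simp only [SetLike.mem_coe, LinearMap.mem_ker] at hu ⊢
        have hc : (x : Module.End F W) (a u) = a ((x : Module.End F W) u) := by
          calc (x : Module.End F W) (a u) = ((x : Module.End F W) * a) u := rfl
            _ = (a * (x : Module.End F W)) u := by rw [hxa x]
            _ = a ((x : Module.End F W) u) := rfl
        rw [hc, hu, map_zero]
      · simp [ha, LinearMap.restrict_apply]
    have hSbot : S ≠ ⊥ := by
      rcases Submodule.exists_mem_ne_zero_of_ne_bot (by exact hkx) with ⟨u, hu, hu0⟩
      intro h0
      have : (u : V) ∈ S := ⟨u, hu, rfl⟩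
      rw [h0, Submodule.mem_bot] at this
      exact hu0 (Subtype.ext this)
    have hSW := hmin S hSle hSinv hSbot
    apply hx
    apply Subtype.ext
    have : Submodule.map W.subtype (LinearMap.ker (x : Module.End F W)) =
        Submodule.map W.subtype ⊤ := by
      rw [← hS, hSW, Submodule.map_top, Submodule.range_subtype]
    have hker_top := Submodule.map_injective_of_injective (Submodule.injective_subtype W) this
    exact LinearMap.ker_eq_top.mp hker_top
  -- pick a nonzero vector in W
  obtain ⟨w0, hw0mem, hw00⟩ := Submodule.exists_mem_ne_zero_of_ne_bot hWbot
  set w : W := ⟨w0, hw0mem⟩ with hw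
  have hw0 : w ≠ 0 := fun h => hw00 (congrArg Subtype.val h)
  haveI : Nontrivial W := nontrivial_of_ne w 0 hw0
  -- evaluation map E →ₗ[F] W at w
  set ev : E →ₗ[F] W :=
    { toFun := fun x => (x : Module.End F W) w
      map_add' := fun x y => rfl
      map_smul' := fun c x => rfl } with hev
  have hevinj : Function.Injective ev := by
    intro x y hxy
    by_contra hne
    have hxy0 : x - y ≠ 0 := sub_ne_zero.mpr hne
    have hz : ((x - y : E) : Module.End F W) w = 0 := by
      have h1 : ((x - y : E) : Module.End F W) w = ev x - ev y := rfl
      rw [h1, hxy, sub_self]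
    exact hw0 (hinj (x - y) hxy0 (by simpa using hz))
  have hevsurj : Function.Surjective ev := by
    set S : Submodule F V := Submodule.map W.subtype (LinearMap.range ev) with hS
    have hSle : S ≤ W := Submodule.map_subtype_le _ _
    have hSinv : ∀ v ∈ S, A v ∈ S := by
      rintro v ⟨u, ⟨x, rfl⟩, rfl⟩
      refine ⟨a (ev x), ⟨⟨a, Algebra.self_mem_adjoin_singleton F a⟩ * x, rfl⟩, ?_⟩
      simp [ha, LinearMap.restrict_apply]
    have hSbot : S ≠ ⊥ := by
      intro h0
      have hmem : (w : V) ∈ S := ⟨w, ⟨1, rfl⟩, rfl⟩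
      rw [h0, Submodule.mem_bot] at hmem
      exact hw0 (Subtype.ext hmem)
    have hSW := hmin S hSle hSinv hSbot
    intro u
    have hu : (u : V) ∈ S := by rw [hSW]; exact u.2
    rcases hu with ⟨u', ⟨x, rfl⟩, huu⟩
    exact ⟨x, Subtype.ext huu⟩
  have hEW : finrank F E = finrank F W :=
    (LinearEquiv.ofBijective ev ⟨hevinj, hevsurj⟩).finrank_eq
  -- E is a finite commutative domain, hence a field
  haveI : Finite E := Module.finite_of_finite F
  haveI : Fintype E := Fintype.ofFinite E
  haveI : Nontrivial E := by
    refine ⟨1, 0, fun h10 => ?_⟩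
    apply hw0
    have h1 : ev 1 = ev 0 := by rw [h10]
    simpa [hev] using h1
  haveI : NoZeroDivisors E := by
    refine ⟨fun {x y} hxy => ?_⟩
    by_contra hcon
    push_neg at hcon
    obtain ⟨hx0, hy0⟩ := hcon
    apply hy0
    apply Subtype.ext
    ext u
    have h1 : (x : Module.End F W) ((y : Module.End F W) u) = 0 := by
      have h2 : ((x * y : E) : Module.End F W) u = 0 := by rw [hxy]; rfl
      exact h2
    have h3 : (y : Module.End F W) u = 0 := hinj x hx0 (by rw [map_zero]; exact h1)
    simp [h3]
  haveI : IsDomain E := NoZeroDivisors.to_isDomain E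
  letI : Field E := @Fintype.fieldOfDomain E _ _ (Classical.decEq E) _
  haveI : IsCyclic Eˣ := inferInstance
  obtain ⟨g, hg⟩ := IsCyclic.exists_monoid_generator (α := Eˣ)
  have horder : orderOf g = Fintype.card E - 1 := by
    rw [orderOf_eq_card_of_forall_mem_zpowers (fun x => mem_powers_iff_mem_zpowers.mp (hg x)),
      Nat.card_eq_fintype_card, Fintype.card_units]
  -- char of E
  haveI : CharP E 2 := charP_of_injective_algebraMap
    (algebraMap F E).injective 2
  obtain ⟨m, hp2, hqm⟩ := FiniteField.card F 2
  -- every element of E is fixed by x ↦ x ^ (q ^ k)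
  have hfix : ∀ x : E, x ^ (q ^ k) = x := by
    have haE : (⟨a, Algebra.self_mem_adjoin_singleton F a⟩ : E) ^ (q ^ k) =
        ⟨a, Algebra.self_mem_adjoin_singleton F a⟩ := by
      have hnm : n * (q ^ k / n) + 1 = q ^ k := by
        have h1 : q ^ k % n = 1 := by rwa [Nat.one_mod_eq_one.mpr (by omega)] at hqk
        have := Nat.div_add_mod (q ^ k) n
        omega
      have haEn : (⟨a, Algebra.self_mem_adjoin_singleton F a⟩ : E) ^ n = 1 := by
        apply Subtype.ext
        rw [SubmonoidClass.coe_pow, OneMemClass.coe_one]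
        exact han
      calc (⟨a, Algebra.self_mem_adjoin_singleton F a⟩ : E) ^ (q ^ k)
          = ((⟨a, Algebra.self_mem_adjoin_singleton F a⟩ : E) ^ n) ^ (q ^ k / n) *
            ⟨a, Algebra.self_mem_adjoin_singleton F a⟩ := by
            rw [← pow_mul, ← pow_succ, hnm]
        _ = _ := by rw [haEn, one_pow, one_mul]
    have hqk2 : q ^ k = 2 ^ ((m : ℕ) * k) := by rw [← hq, hqm, ← pow_mul]
    intro x
    obtain ⟨x, hx⟩ := x
    induction hx using Algebra.adjoin_induction with
    | mem y hy =>
      rcases hy with rfl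
      exact haE
    | algebraMap r =>
      change (algebraMap F E r) ^ (q ^ k) = algebraMap F E r
      rw [← map_pow]
      congr 1
      have := FiniteField.pow_card_pow k r
      rwa [hq] at this
    | add x y hx' hy' hx hy =>
      change ((⟨x, hx'⟩ : E) + ⟨y, hy'⟩) ^ (q ^ k) = (⟨x, hx'⟩ : E) + ⟨y, hy'⟩
      rw [hqk2, add_pow_char_pow, ← hqk2, hx, hy]
    | mul x y hx' hy' hx hy =>
      change ((⟨x, hx'⟩ : E) * ⟨y, hy'⟩) ^ (q ^ k) = (⟨x, hx'⟩ : E) * ⟨y, hy'⟩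
      rw [mul_pow, hx, hy]
  -- hence q ^ d - 1 divides q ^ k - 1
  set d := finrank F E with hd
  have hcardE : Fintype.card E = q ^ d := by
    rw [hd, ← hq]; exact card_eq_pow_finrank
  have hqk1 : 1 ≤ q ^ k := Nat.one_le_pow _ _ (by
    have : 2 ≤ Fintype.card F := Fintype.one_lt_card
    omega)
  have hgpow : g ^ (q ^ k - 1) = 1 := by
    have h1 : (g : E) ^ (q ^ k) = g := hfix g
    have h2 : g ^ (q ^ k) = g := Units.ext (by rw [Units.val_pow_eq_pow_val]; exact h1)
    have h3 : g ^ (q ^ k - 1) * g = g := by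
      rw [← pow_succ, Nat.sub_add_cancel hqk1, h2]
    exact mul_right_cancel (by rw [h3, one_mul])
  have hdvd : q ^ d - 1 ∣ q ^ k - 1 := by
    rw [← hcardE, ← horder]
    exact orderOf_dvd_of_pow_eq_one hgpow
  have hq2 : 2 ≤ q := by rw [← hq]; exact Fintype.one_lt_card
  have hd0 : 0 < d := finrank_pos
  rw [← hEW]
  exact aux_dvd_of_pow_sub_one_dvd hq2 hd0 hdvd




/-- The number of factors in the composition series `s` that are isomorphic to `U`. -/
def cfCount (R : Type) [Ring R] {M : Type} [AddCommGroup M] [Module R M]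
    (s : CompositionSeries (Submodule R M)) (U : Type) [AddCommGroup U] [Module R U] : ℕ :=
  Nat.card {i : Fin s.length //
    Nonempty ((↥(s i.succ) ⧸ Submodule.comap (s i.succ).subtype (s i.castSucc)) ≃ₗ[R] U)}

/-- A representation is self-dual if it is isomorphic to its (contragredient) dual. -/
def SelfDualRep {F : Type} [Field F] {G : Type} [Group G] {V : Type} [AddCommGroup V]
    [Module F V] (ρ : Representation F G V) : Prop :=
  Nonempty (ρ.asModule ≃ₗ[MonoidAlgebra F G] ρ.dual.asModule)

/-- A representation is an even-multiplicity module if every self-dual simple module occurs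
with even multiplicity in any composition series. -/
def IsEvenMultiplicity {F : Type} [Field F] {G : Type} [Group G] {V : Type} [AddCommGroup V]
    [Module F V] (ρ : Representation F G V) : Prop :=
  ∀ (U : Type) (_ : AddCommGroup U) (_ : Module F U) (μ : Representation F G U),
    IsSimpleModule (MonoidAlgebra F G) μ.asModule → SelfDualRep μ →
    ∀ s : CompositionSeries (Submodule (MonoidAlgebra F G) ρ.asModule),
      s.head = ⊥ → s.last = ⊤ → Even (cfCount (MonoidAlgebra F G) s μ.asModule)

/-- Let `F` be a finite field of characteristic `2` with `q` elements and `G` the dihedral group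
of order `2n`, `n ≥ 3` odd.  For every faithful simple `FG`-module `V`,
`ν₂(dim_F V) ≤ ν₂(ord_n(q)) + 1`. -/
theorem stmt_10 (F : Type) [Field F] [Fintype F] [CharP F 2] (q : ℕ) (hq : Fintype.card F = q)
    (n : ℕ) (hodd : Odd n) (hn3 : 3 ≤ n)
    (V : Type) [AddCommGroup V] [Module F V]
    (ρ : Representation F (DihedralGroup n) V)
    (hfaith : Function.Injective ρ)
    (hsimple : IsSimpleModule (MonoidAlgebra F (DihedralGroup n)) ρ.asModule) :
    padicValNat 2 (Module.finrank F V) ≤ padicValNat 2 (orderOf (q : ZMod n)) + 1 := by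
  classical
  by_cases hfd : FiniteDimensional F V
  swap
  · rw [Module.finrank_of_infinite_dimensional hfd]
    simp
  haveI : NeZero n := ⟨by omega⟩
  haveI : Fact (Nat.Prime 2) := ⟨Nat.prime_two⟩
  set k := orderOf (q : ZMod n) with hkdef
  -- k is positive
  obtain ⟨m, hp2, hqm⟩ := FiniteField.card F 2
  have hcop : Nat.Coprime q n := by
    rw [← hq, hqm]
    exact Nat.Coprime.pow_left _ (Nat.coprime_two_left.mpr hodd)
  have hunit : IsUnit (q : ZMod n) := (ZMod.isUnit_iff_coprime q n).mpr hcop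
  obtain ⟨u, hu⟩ := hunit
  have hk : 0 < k := by
    rw [hkdef, ← hu, orderOf_units]
    exact orderOf_pos u
  have hqk : q ^ k % n = 1 % n := by
    have h1 : (q : ZMod n) ^ k = 1 := pow_orderOf_eq_one _
    have h2 : ((q ^ k : ℕ) : ZMod n) = ((1 : ℕ) : ZMod n) := by push_cast; simpa using h1
    exact (ZMod.natCast_eq_natCast_iff _ _ _).mp h2
  haveI : Nontrivial V :=
    IsSimpleModule.nontrivial (MonoidAlgebra F (DihedralGroup n)) ρ.asModule
  -- the two key operators
  set A : Module.End F V := ρ (DihedralGroup.r 1) with hA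
  set T : Module.End F V := ρ (DihedralGroup.sr 0) with hT
  have hAn : A ^ n = 1 := by
    rw [hA, ← map_pow, DihedralGroup.r_one_pow_n, map_one]
  have hTT : T * T = 1 := by
    rw [hT, ← map_mul, DihedralGroup.sr_mul_sr, sub_zero,
      ← DihedralGroup.one_def, map_one]
  have hTinj : Function.Injective T := by
    intro x y hxy
    have h1 : (T * T) x = (T * T) y := by
      simp only [Module.End.mul_apply, hxy]
    rwa [hTT, Module.End.one_apply, Module.End.one_apply] at h1
  have hATTA : A * T = T * (A ^ (n - 1)) := by
    have h1 : (DihedralGroup.r 1 : DihedralGroup n) ^ (n - 1) = DihedralGroup.r (-1) := by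
      rw [DihedralGroup.r_one_pow]
      congr 1
      push_cast [Nat.cast_sub (by omega : 1 ≤ n)]
      simp [ZMod.natCast_self]
    rw [hA, hT, ← map_pow, h1, ← map_mul, ← map_mul]
    congr 1
    simp [DihedralGroup.r_mul_sr, DihedralGroup.sr_mul_r]
  -- minimal nonzero A-invariant subspace
  set P : Submodule F V → Prop := fun S => ∀ v ∈ S, A v ∈ S with hP
  set 𝒮 : Set ℕ := {m | ∃ S : Submodule F V, P S ∧ S ≠ ⊥ ∧ finrank F S = m} with h𝒮
  have htopbot : (⊤ : Submodule F V) ≠ ⊥ := by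
    obtain ⟨x, hx⟩ := exists_ne (0 : V)
    intro h
    have : x ∈ (⊥ : Submodule F V) := h ▸ Submodule.mem_top
    exact hx (Submodule.mem_bot F |>.mp this)
  have h𝒮ne : 𝒮.Nonempty := ⟨finrank F (⊤ : Submodule F V), ⊤, fun v _ => trivial,
    htopbot, rfl⟩
  obtain ⟨W, hPW, hWbot, hWrank⟩ : ∃ S : Submodule F V, P S ∧ S ≠ ⊥ ∧ finrank F S = sInf 𝒮 :=
    Nat.sInf_mem h𝒮ne
  have hmin : ∀ S : Submodule F V, S ≤ W → (∀ v ∈ S, A v ∈ S) → S ≠ ⊥ → S = W := by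
    intro S hle hPS hSbot
    have h1 : sInf 𝒮 ≤ finrank F S := Nat.sInf_le ⟨S, hPS, hSbot, rfl⟩
    exact Submodule.eq_of_le_of_finrank_le hle (by omega)
  -- the reflected subspace
  set TW : Submodule F V := W.map T with hTW
  have hPTW : P TW := by
    rintro v ⟨u, hu, rfl⟩
    have h2 : A (T u) = T ((A ^ (n - 1)) u) := by
      have := congrArg (fun f : Module.End F V => f u) hATTA
      simpa using this
    exact ⟨(A ^ (n - 1)) u, Module.End.pow_apply_mem_of_forall_mem (n - 1) hPW u hu, h2.symm⟩
  have hTe : ∃ e : V ≃ₗ[F] V, (e : V →ₗ[F] V) = T := by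
    refine ⟨LinearEquiv.ofLinear T T ?_ ?_, rfl⟩ <;>
      · ext x; have := congrArg (fun f : Module.End F V => f x) hTT; simpa using this
  obtain ⟨Te, hTe⟩ := hTe
  have hTWrank : finrank F TW = finrank F W := by
    rw [hTW, ← hTe]
    exact LinearEquiv.finrank_map_eq Te W
  -- the sum is a G-submodule
  set X : Submodule F V := W ⊔ TW with hX
  have hPX : P X := by
    intro v hv
    rcases Submodule.mem_sup.mp hv with ⟨w1, hw1, w2, hw2, rfl⟩
    rw [map_add]
    exact Submodule.add_mem_sup (hPW w1 hw1) (hPTW w2 hw2)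
  have hTX : ∀ v ∈ X, T v ∈ X := by
    intro v hv
    rcases Submodule.mem_sup.mp hv with ⟨w1, hw1, w2, hw2, rfl⟩
    rw [map_add]
    refine Submodule.add_mem _ ?_ ?_
    · exact Submodule.mem_sup_right (Submodule.mem_map_of_mem hw1)
    · rcases hw2 with ⟨u, hu, rfl⟩
      have h3 : T (T u) = u := by
        have := congrArg (fun f : Module.End F V => f u) hTT
        simpa using this
      rw [h3]
      exact Submodule.mem_sup_left hu
  have hGX : ∀ g : DihedralGroup n, ∀ v ∈ X, ρ g v ∈ X := by
    intro g v hv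
    cases g with
    | r j =>
      have h1 : ρ (DihedralGroup.r j) = A ^ j.val := by
        rw [hA, ← map_pow, DihedralGroup.r_one_pow]
        congr 1
        congr 1
        simp [ZMod.natCast_val, ZMod.cast_id]
      rw [h1]
      exact Module.End.pow_apply_mem_of_forall_mem _ hPX v hv
    | sr j =>
      have h1 : (DihedralGroup.sr j : DihedralGroup n) =
          DihedralGroup.sr 0 * DihedralGroup.r j := by
        rw [DihedralGroup.sr_mul_r, zero_add]
      have h2 : ρ (DihedralGroup.r j) = A ^ j.val := by
        rw [hA, ← map_pow, DihedralGroup.r_one_pow]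
        congr 1
        congr 1
        simp [ZMod.natCast_val, ZMod.cast_id]
      rw [h1, map_mul, Module.End.mul_apply, h2, ← hT]
      exact hTX _ (Module.End.pow_apply_mem_of_forall_mem _ hPX v hv)
  -- build the corresponding MonoidAlgebra-submodule
  have hAlg : ∀ c : MonoidAlgebra F (DihedralGroup n), ∀ x ∈ X, ρ.asAlgebraHom c x ∈ X := by
    intro c
    induction c using MonoidAlgebra.induction_on with
    | of g =>
      intro x hx
      rw [Representation.asAlgebraHom_of]
      exact hGX g x hx
    | add f g hf hg =>
      intro x hx
      rw [map_add, LinearMap.add_apply]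
      exact X.add_mem (hf x hx) (hg x hx)
    | smul r f hf =>
      intro x hx
      rw [map_smul, LinearMap.smul_apply]
      exact X.smul_mem r (hf x hx)
  set N : Submodule (MonoidAlgebra F (DihedralGroup n)) ρ.asModule :=
    { carrier := (X : Set V)
      add_mem' := fun hx hy => X.add_mem hx hy
      zero_mem' := X.zero_mem
      smul_mem' := fun c x hx => hAlg c x hx } with hN
  obtain ⟨w0, hw0mem, hw00⟩ := Submodule.exists_mem_ne_zero_of_ne_bot hWbot
  have hNtop : N = ⊤ := by
    rcases eq_bot_or_eq_top N with hbot | htop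
    · exfalso
      have h1 : (show ρ.asModule from w0) ∈ N := show w0 ∈ X from Submodule.mem_sup_left hw0mem
      rw [hbot, Submodule.mem_bot] at h1
      exact hw00 h1
    · exact htop
  have hXtop : X = ⊤ := by
    rw [Submodule.eq_top_iff']
    intro v
    have h1 : (show ρ.asModule from v) ∈ N := by rw [hNtop]; exact Submodule.mem_top
    exact h1
  -- dimension count
  have hdim : finrank F V = finrank F X := by rw [hXtop, finrank_top]
  have hsum : finrank F X + finrank F (W ⊓ TW : Submodule F V)
      = finrank F W + finrank F TW := by
    rw [hX]
    exact Submodule.finrank_sup_add_finrank_inf_eq W TW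
  set d := finrank F W with hd
  have hdpos : 0 < d := by
    refine Nat.pos_of_ne_zero fun h0 => hWbot ?_
    exact Submodule.finrank_eq_zero.mp (hd ▸ h0)
  have hdk : d ∣ k := by
    show finrank F W ∣ k
    exact aux_core F q hq k hk n (by omega) hqk V A hAn W hWbot hPW hmin
  have hcase : finrank F V = d ∨ finrank F V = 2 * d := by
    by_cases hinf : (W ⊓ TW : Submodule F V) = ⊥
    · right
      rw [hinf, finrank_bot, add_zero] at hsum
      rw [hdim, hsum, hTWrank]
      ring
    · left
      have hPinf : ∀ v ∈ (W ⊓ TW : Submodule F V), A v ∈ (W ⊓ TW : Submodule F V) := by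
        intro v hv
        rcases Submodule.mem_inf.mp hv with ⟨h1, h2⟩
        exact Submodule.mem_inf.mpr ⟨hPW v h1, hPTW v h2⟩
      have h2 := hmin _ inf_le_left hPinf hinf
      have h3 : W ≤ TW := by
        rw [← h2]; exact inf_le_right
      have h4 : X = TW := by rw [hX, sup_eq_right.mpr h3]
      rw [hdim, h4, hTWrank]
  -- conclude
  have hk0 : k ≠ 0 := by omega
  have hd0 : d ≠ 0 := by omega
  have hdk2 : padicValNat 2 d ≤ padicValNat 2 k := by
    rw [← Nat.factorization_def d Nat.prime_two, ← Nat.factorization_def k Nat.prime_two]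
    exact (Nat.factorization_le_iff_dvd hd0 hk0).mpr hdk 2
  rcases hcase with h | h
  · rw [h]
    omega
  · rw [h, padicValNat.mul (by norm_num) hd0, padicValNat.self (by norm_num)]
    omega
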